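/- Let (X,d) be a complete metric space, K ⊂ X compact, and μ, μ' ∈ (0,1). Let (f_n) and (h_n) be sequences of self-maps of K with Lipschitz constants at most μ and μ' respectively, with respective non-stationary limit points x* and y* (i.e., f_1∘⋯∘f_n(x) → x* and h_1∘⋯∘h_n(x) → y* for all x ∈ K). If sup_n sup_{x∈K} d(f_n(x), h_n(x)) ≤ ε', then d(x*, y*) ≤ ε'/(1−μ) + ε'/(1−μ') (in particular, for every ε > 0 there is ε' > 0 making d(x*,y*) < ε). -/
import Mathlib


/-- The non-stationary composition `f₁ ∘ f₂ ∘ ⋯ ∘ fₙ`. -/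
def nsComp {X : Type*} (f : ℕ → X → X) : ℕ → X → X
  | 0 => id
  | n + 1 => nsComp f n ∘ f (n + 1)

/-- Stability of the non-stationary fixed point. If `(fₙ)` and `(hₙ)` are
sequences of `μ`- resp. `μ'`-contractions of the compact `K` with non-stationary limit
points `x*`, `y*`, and `dist(fₙ x, hₙ x) ≤ ε'` uniformly, then
`dist(x*, y*) ≤ ε'/(1−μ) + ε'/(1−μ')`. -/
theorem stmt10 {X : Type*} [MetricSpace X] [CompleteSpace X]
    {K : Set X} (hK : IsCompact K) (hne : K.Nonempty)
    {μ μ' : ℝ} (hμ : μ ∈ Set.Ioo (0 : ℝ) 1) (hμ' : μ' ∈ Set.Ioo (0 : ℝ) 1)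
    (f h : ℕ → X → X)
    (hfmaps : ∀ n, Set.MapsTo (f n) K K) (hhmaps : ∀ n, Set.MapsTo (h n) K K)
    (hfcontr : ∀ n, ∀ x ∈ K, ∀ y ∈ K, dist (f n x) (f n y) ≤ μ * dist x y)
    (hhcontr : ∀ n, ∀ x ∈ K, ∀ y ∈ K, dist (h n x) (h n y) ≤ μ' * dist x y)
    {xs ys : X}
    (hxs : ∀ x ∈ K, Filter.Tendsto (fun n => nsComp f n x) Filter.atTop (nhds xs))
    (hys : ∀ x ∈ K, Filter.Tendsto (fun n => nsComp h n x) Filter.atTop (nhds ys))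
    {ε' : ℝ} (hε' : 0 ≤ ε') (hclose : ∀ n, ∀ x ∈ K, dist (f n x) (h n x) ≤ ε') :
    dist xs ys ≤ ε' / (1 - μ) + ε' / (1 - μ') := by
  obtain ⟨hμ0, hμ1⟩ := hμ
  obtain ⟨hμ'0, hμ'1⟩ := hμ'
  -- nsComp f n maps K to K
  have hFmaps : ∀ n, Set.MapsTo (nsComp f n) K K := by
    intro n
    induction n with
    | zero => exact fun x hx => hx
    | succ n ih => exact fun x hx => ih ((hfmaps (n + 1)) hx)
  have hHmaps : ∀ n, Set.MapsTo (nsComp h n) K K := by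
    intro n
    induction n with
    | zero => exact fun x hx => hx
    | succ n ih => exact fun x hx => ih ((hhmaps (n + 1)) hx)
  -- nsComp f n is μ^n-Lipschitz on K
  have hFlip : ∀ n, ∀ x ∈ K, ∀ y ∈ K,
      dist (nsComp f n x) (nsComp f n y) ≤ μ ^ n * dist x y := by
    intro n
    induction n with
    | zero => intro x _ y _; simp [nsComp]
    | succ n ih =>
      intro x hx y hy
      have h1 := ih (f (n + 1) x) (hfmaps (n + 1) hx) (f (n + 1) y) (hfmaps (n + 1) hy)
      have h2 := hfcontr (n + 1) x hx y hy
      calc dist (nsComp f (n + 1) x) (nsComp f (n + 1) y)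
          = dist (nsComp f n (f (n + 1) x)) (nsComp f n (f (n + 1) y)) := rfl
        _ ≤ μ ^ n * dist (f (n + 1) x) (f (n + 1) y) := h1
        _ ≤ μ ^ n * (μ * dist x y) := by
            exact mul_le_mul_of_nonneg_left h2 (pow_nonneg hμ0.le n)
        _ = μ ^ (n + 1) * dist x y := by ring
  -- uniform bound between the two compositions
  have hbound : ∀ n, ∀ x ∈ K,
      dist (nsComp f n x) (nsComp h n x) ≤ ε' * ∑ k ∈ Finset.range n, μ ^ k := by
    intro n
    induction n with
    | zero => intro x _; simp [nsComp]
    | succ n ih =>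
      intro x hx
      have hfx : f (n + 1) x ∈ K := hfmaps (n + 1) hx
      have hhx : h (n + 1) x ∈ K := hhmaps (n + 1) hx
      have h1 : dist (nsComp f n (f (n + 1) x)) (nsComp f n (h (n + 1) x)) ≤ μ ^ n * ε' := by
        calc dist (nsComp f n (f (n + 1) x)) (nsComp f n (h (n + 1) x))
            ≤ μ ^ n * dist (f (n + 1) x) (h (n + 1) x) := hFlip n _ hfx _ hhx
          _ ≤ μ ^ n * ε' := by
              exact mul_le_mul_of_nonneg_left (hclose (n + 1) x hx) (pow_nonneg hμ0.le n)
      have h2 := ih (h (n + 1) x) hhx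
      calc dist (nsComp f (n + 1) x) (nsComp h (n + 1) x)
          ≤ dist (nsComp f n (f (n + 1) x)) (nsComp f n (h (n + 1) x))
            + dist (nsComp f n (h (n + 1) x)) (nsComp h n (h (n + 1) x)) := dist_triangle _ _ _
        _ ≤ μ ^ n * ε' + ε' * ∑ k ∈ Finset.range n, μ ^ k := add_le_add h1 h2
        _ = ε' * ∑ k ∈ Finset.range (n + 1), μ ^ k := by
            rw [geom_sum_succ']; ring
  -- geometric sum bound
  have hgeom : ∀ n : ℕ, ε' * ∑ k ∈ Finset.range n, μ ^ k ≤ ε' / (1 - μ) := by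
    intro n
    have h1μ : 0 < 1 - μ := by linarith
    have hsum : ∑ k ∈ Finset.range n, μ ^ k ≤ 1 / (1 - μ) := by
      rw [le_div_iff₀ h1μ]
      have hg := geom_sum_mul μ n
      have : 0 ≤ μ ^ n := pow_nonneg hμ0.le n
      nlinarith
    calc ε' * ∑ k ∈ Finset.range n, μ ^ k ≤ ε' * (1 / (1 - μ)) :=
          mul_le_mul_of_nonneg_left hsum hε'
      _ = ε' / (1 - μ) := by ring
  obtain ⟨x, hx⟩ := hne
  have hlim : Filter.Tendsto (fun n => dist (nsComp f n x) (nsComp h n x))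
      Filter.atTop (nhds (dist xs ys)) :=
    Filter.Tendsto.dist (hxs x hx) (hys x hx)
  have hmain : dist xs ys ≤ ε' / (1 - μ) :=
    le_of_tendsto hlim (Filter.Eventually.of_forall fun n =>
      (hbound n x hx).trans (hgeom n))
  have hnonneg : 0 ≤ ε' / (1 - μ') := div_nonneg hε' (by linarith)
  linarith
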